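/- Define ψ(t,μ) piecewise by: ψ = 0 if t ≤ 0; ψ = t²/(2μ) if 0 < t ≤ μ; ψ = (1/4)(t-μ)² + t - μ/2 if μ < t ≤ μ + √μ; ψ = -(1/4)(t - μ - 2√μ)² + t if μ + √μ < t ≤ μ + 2√μ; ψ = t if t > μ + 2√μ. Then for every μ ∈ (0,1] and t ∈ ℝ, |ψ(t,μ) - max{t,0}| ≤ μ/2. -/

import Mathlib

/-- The piecewise smoothing function of `max{t,0}` from equation (3.8) of the paper. -/
noncomputable def psi (μ t : ℝ) : ℝ :=
  if t ≤ 0 then 0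
  else if t ≤ μ then t ^ 2 / (2 * μ)
  else if t ≤ μ + Real.sqrt μ then (1 / 4) * (t - μ) ^ 2 + t - μ / 2
  else if t ≤ μ + 2 * Real.sqrt μ then -(1 / 4) * (t - μ - 2 * Real.sqrt μ) ^ 2 + t
  else t

/-- `|ψ(t,μ) - max{t,0}| ≤ μ/2` for all `μ ∈ (0,1]`, `t ∈ ℝ`. -/
theorem stmt9 : ∀ μ ∈ Set.Ioc (0 : ℝ) 1, ∀ t : ℝ, |psi μ t - max t 0| ≤ μ / 2 := by
  rintro μ ⟨hμ, hμ1⟩ t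
  have hs : Real.sqrt μ ^ 2 = μ := Real.sq_sqrt hμ.le
  have hs0 : 0 ≤ Real.sqrt μ := Real.sqrt_nonneg μ
  rw [abs_le]
  unfold psi
  split_ifs with h1 h2 h3 h4
  · rw [max_eq_right h1]; constructor <;> linarith
  · rw [max_eq_left (le_of_not_ge h1)]
    have ht : 0 < t := lt_of_not_ge h1
    rw [div_sub' (by positivity), div_le_iff₀ (by positivity), le_div_iff₀ (by positivity)]
    constructor <;> nlinarith
  · rw [max_eq_left (le_of_not_ge h1)]
    have h5 : t - μ ≤ Real.sqrt μ := by linarith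
    constructor <;> nlinarith
  · rw [max_eq_left (le_of_not_ge h1)]
    have h5 : -(Real.sqrt μ) ≤ t - μ - 2 * Real.sqrt μ := by nlinarith
    have h6 : t - μ - 2 * Real.sqrt μ ≤ 0 := by linarith
    constructor <;> nlinarith
  · rw [max_eq_left (le_of_not_ge h1)]; constructor <;> linarith
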